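/- In a clause gadget consisting of three pairwise crossing segments of length 8, with each crossing point at distance 1 from an endpoint of each involved segment, at most one of the three segments can be drawn fully in any SPED, and the maximum total ink contributed by the three segments is exactly 12 (one full segment of length 8 plus two stub pairs of total length 2 each). -/

import Mathlib

/-- the clause gadget.  Three pairwise crossing segments of length 8, each
crossing point at distance 1 from an endpoint of each involved segment.  A SPED assigns to
segment i a per-side stub length `t i` with `0 < t i ≤ 4` (value 4 means the segment of
length 8 is drawn fully); a drawn part covers a crossing point iff its stub length exceeds
1, so validity requires that for each of the three crossing pairs not both stub lengths
exceed 1.  Then in any SPED at most one of the three segments is drawn fully, and the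
maximum total ink contributed by the three segments is exactly 12 (one full segment of
length 8 plus two stub pairs of total length 2 each). -/
theorem stmt_3
    (valid : (Fin 3 → ℝ) → Prop)
    (hvalid : ∀ t, valid t ↔
      (∀ i, 0 < t i ∧ t i ≤ 4) ∧ ∀ i j, i ≠ j → ¬ (1 < t i ∧ 1 < t j))
    (ink : (Fin 3 → ℝ) → ℝ)
    (hink : ∀ t, ink t = ∑ i, 2 * t i) :
    (∀ t, valid t → ¬ ∃ i j : Fin 3, i ≠ j ∧ t i = 4 ∧ t j = 4) ∧
    IsGreatest {I | ∃ t, valid t ∧ I = ink t} 12 := by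
  constructor
  · rintro t ht ⟨i, j, hij, hi, hj⟩
    rw [hvalid] at ht
    exact ht.2 i j hij ⟨by rw [hi]; norm_num, by rw [hj]; norm_num⟩
  constructor
  · refine ⟨![4, 1, 1], ?_, ?_⟩
    · rw [hvalid]
      refine ⟨fun i => by fin_cases i <;> norm_num, fun i j hij => ?_⟩
      fin_cases i <;> fin_cases j <;> simp_all <;> norm_num
    · rw [hink, Fin.sum_univ_three]; norm_num [Matrix.cons_val_two, Matrix.tail_cons, Matrix.head_cons]
  · rintro I ⟨t, ht, rfl⟩
    rw [hvalid] at ht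
    obtain ⟨hb, hc⟩ := ht
    rw [hink t, Fin.sum_univ_three]
    have h01 := hc 0 1 (by decide)
    have h02 := hc 0 2 (by decide)
    have h12 := hc 1 2 (by decide)
    push_neg at h01 h02 h12
    have b0 := hb 0; have b1 := hb 1; have b2 := hb 2
    by_cases h0 : 1 < t 0
    · have := h01 h0; have := h02 h0; linarith [b0.2]
    · by_cases h1 : 1 < t 1
      · have := h12 h1; push_neg at h0; linarith [b1.2]
      · push_neg at h0 h1; linarith [b2.2]
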